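/- For every $t \ge 3$, in the identity $(\alpha w_1^3 + \beta w_1 w_2 + \mu w_3)\bar w_{2^t-3} = \lambda w_1^2 \bar w_{2^t-2} + \nu w_1 \bar w_{2^t-1}$ in $\mathbb{Z}_2[w_1,w_2,w_3]$ with $\alpha,\beta,\mu,\lambda,\nu \in \mathbb{Z}_2$, necessarily $\alpha = \beta = 0$. -/

import Mathlib

open MvPolynomial Finset

/-- `wbar r = ∑_{a+2b+3c=r} C(a+b+c,a) C(b+c,b) w₁^a w₂^b w₃^c` in `ℤ₂[w₁,w₂,w₃]`
(variable `X 0` is `w₁`, `X 1` is `w₂`, `X 2` is `w₃`). -/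
noncomputable def wbar (r : ℕ) : MvPolynomial (Fin 3) (ZMod 2) :=
  ∑ a ∈ Finset.range (r + 1), ∑ b ∈ Finset.range (r + 1), ∑ c ∈ Finset.range (r + 1),
    if a + 2 * b + 3 * c = r then
      C ((Nat.choose (a + b + c) a : ZMod 2) * (Nat.choose (b + c) b : ZMod 2)) *
        (X 0) ^ a * (X 1) ^ b * (X 2) ^ c
    else 0

noncomputable def F3 (a b c : ℕ) : Fin 3 →₀ ℕ :=
  Finsupp.single 0 a + Finsupp.single 1 b + Finsupp.single 2 c

lemma F3_apply (a b c : ℕ) : F3 a b c 0 = a ∧ F3 a b c 1 = b ∧ F3 a b c 2 = c := by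
  refine ⟨?_, ?_, ?_⟩ <;> simp [F3, Finsupp.single_apply]

lemma F3_inj {a b c a' b' c' : ℕ} : F3 a b c = F3 a' b' c' ↔ a = a' ∧ b = b' ∧ c = c' := by
  constructor
  · intro h
    obtain ⟨h0, h1, h2⟩ := F3_apply a b c
    obtain ⟨h0', h1', h2'⟩ := F3_apply a' b' c'
    exact ⟨by rw [← h0, h, h0'], by rw [← h1, h, h1'], by rw [← h2, h, h2']⟩
  · rintro ⟨rfl, rfl, rfl⟩; rfl

lemma F3_le {a b c a' b' c' : ℕ} : F3 a' b' c' ≤ F3 a b c ↔ a' ≤ a ∧ b' ≤ b ∧ c' ≤ c := by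
  rw [Finsupp.le_def]
  constructor
  · intro h
    have h0 := h 0; have h1 := h 1; have h2 := h 2
    simp [F3, Finsupp.single_apply] at h0 h1 h2
    exact ⟨h0, h1, h2⟩
  · rintro ⟨ha, hb, hc⟩ i
    fin_cases i <;> simpa [F3, Finsupp.single_apply]

lemma F3_sub (a b c a' b' c' : ℕ) : F3 a b c - F3 a' b' c' = F3 (a - a') (b - b') (c - c') := by
  ext i; fin_cases i <;> simp [F3, Finsupp.single_apply]

lemma term_eq (k : ZMod 2) (a b c : ℕ) :
    C k * (X 0 : MvPolynomial (Fin 3) (ZMod 2)) ^ a * X 1 ^ b * X 2 ^ c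
      = monomial (F3 a b c) k := by
  rw [X_pow_eq_monomial, X_pow_eq_monomial, X_pow_eq_monomial, C_apply, monomial_mul,
    monomial_mul, monomial_mul, zero_add, mul_one, mul_one, mul_one, F3]

lemma coeff_wbar (r a b c : ℕ) :
    coeff (F3 a b c) (wbar r) =
      if a + 2 * b + 3 * c = r then
        ((Nat.choose (a + b + c) a : ZMod 2) * (Nat.choose (b + c) b : ZMod 2)) else 0 := by
  unfold wbar
  simp only [coeff_sum, apply_ite (coeff (F3 a b c)), coeff_zero, term_eq, coeff_monomial,
    F3_inj]
  by_cases h : a + 2 * b + 3 * c = r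
  · rw [if_pos h]
    rw [Finset.sum_eq_single a ?h1 ?h2]
    case h1 =>
      intro a' _ ha'
      refine Finset.sum_eq_zero fun b' _ => Finset.sum_eq_zero fun c' _ => ?_
      simp [ha']
    case h2 => intro h'; simp only [Finset.mem_range] at h'; omega
    rw [Finset.sum_eq_single b ?h3 ?h4]
    case h3 =>
      intro b' _ hb'
      refine Finset.sum_eq_zero fun c' _ => ?_
      simp [hb']
    case h4 => intro h'; simp only [Finset.mem_range] at h'; omega
    rw [Finset.sum_eq_single c ?h5 ?h6]
    case h5 => intro c' _ hc'; simp [hc']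
    case h6 => intro h'; simp only [Finset.mem_range] at h'; omega
    simp [h]
  · rw [if_neg h]
    refine Finset.sum_eq_zero fun a' _ => Finset.sum_eq_zero fun b' _ =>
      Finset.sum_eq_zero fun c' _ => ?_
    split_ifs with h1 h2
    · rcases h2 with ⟨rfl, rfl, rfl⟩; omega
    all_goals rfl

lemma coeff_F3_monomial_mul (k : ZMod 2) (p : MvPolynomial (Fin 3) (ZMod 2))
    (a b c a' b' c' : ℕ) :
    coeff (F3 a b c) (monomial (F3 a' b' c') k * p) =
      if a' ≤ a ∧ b' ≤ b ∧ c' ≤ c then k * coeff (F3 (a - a') (b - b') (c - c')) p else 0 := by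
  rw [coeff_monomial_mul', F3_sub]
  simp [F3_le]

lemma choose2 (n k : ℕ) :
    ((n.choose k : ℕ) : ZMod 2) = (((n % 2).choose (k % 2) * ((n / 2).choose (k / 2)) : ℕ) : ZMod 2) := by
  have := @Choose.choose_modEq_choose_mod_mul_choose_div_nat n k 2 ⟨Nat.prime_two⟩
  exact (ZMod.natCast_eq_natCast_iff _ _ _).mpr this

lemma cast_even (x : ℕ) (h : x % 2 = 0) : ((x : ℕ) : ZMod 2) = 0 := by
  rw [show ((x:ℕ):ZMod 2) = ((x % 2 : ℕ) : ZMod 2) from (ZMod.natCast_mod x 2).symm, h]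
  rfl

lemma cast_odd (x : ℕ) (h : x % 2 = 1) : ((x : ℕ) : ZMod 2) = 1 := by
  rw [show ((x:ℕ):ZMod 2) = ((x % 2 : ℕ) : ZMod 2) from (ZMod.natCast_mod x 2).symm, h]
  rfl

lemma choose_pred (n : ℕ) (h : 1 ≤ n) : n.choose (n - 1) = n := by
  rw [Nat.choose_symm h, Nat.choose_one_right]

section Values
variable {Q : ℕ} (hQ : 1 ≤ Q)
include hQ

lemma V1 : (((4 * Q - 1).choose 1 : ℕ) : ZMod 2) = 1 := by
  rw [Nat.choose_one_right]; exact cast_odd _ (by omega)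

lemma V2 : (((4 * Q).choose 3 : ℕ) : ZMod 2) = 0 := by
  rw [choose2, show (4 * Q) % 2 = 0 by omega, show (3 : ℕ) % 2 = 1 by norm_num]
  norm_num

lemma V3 : (((4 * Q).choose 2 : ℕ) : ZMod 2) = 0 := by
  rw [choose2, show (4 * Q) % 2 = 0 by omega, show (2 : ℕ) % 2 = 0 by norm_num,
    show (4 * Q) / 2 = 2 * Q by omega, show (2 : ℕ) / 2 = 1 by norm_num]
  simp only [Nat.choose_self, Nat.choose_one_right, one_mul]
  exact cast_even _ (by omega)

lemma V4 : (((4 * Q + 1).choose 3 : ℕ) : ZMod 2) = 0 := by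
  rw [choose2, show (4 * Q + 1) % 2 = 1 by omega, show (3 : ℕ) % 2 = 1 by norm_num,
    show (4 * Q + 1) / 2 = 2 * Q by omega, show (3 : ℕ) / 2 = 1 by norm_num]
  simp only [Nat.choose_self, Nat.choose_one_right, one_mul]
  exact cast_even _ (by omega)

lemma V5 : (((4 * Q - 2).choose (4 * Q - 3) : ℕ) : ZMod 2) = 0 := by
  rw [show 4 * Q - 3 = (4 * Q - 2) - 1 by omega, choose_pred _ (by omega)]
  exact cast_even _ (by omega)

lemma V6 : (((4 * Q - 1).choose 2 : ℕ) : ZMod 2) = 1 := by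
  rw [choose2, show (4 * Q - 1) % 2 = 1 by omega, show (2 : ℕ) % 2 = 0 by norm_num,
    show (4 * Q - 1) / 2 = 2 * Q - 1 by omega, show (2 : ℕ) / 2 = 1 by norm_num]
  simp only [Nat.choose_zero_right, Nat.choose_one_right, one_mul]
  exact cast_odd _ (by omega)

lemma V7 : (((4 * Q - 3).choose (4 * Q - 4) : ℕ) : ZMod 2) = 1 := by
  rw [show 4 * Q - 4 = (4 * Q - 3) - 1 by omega, choose_pred _ (by omega)]
  exact cast_odd _ (by omega)

end Values

lemma coeff_mmw (k : ZMod 2) (a' b' c' A B Cc r as bs cs S T : ℕ)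
    (h1 : a' + as = A) (h2 : b' + bs = B) (h3 : c' + cs = Cc)
    (hS : as + bs + cs = S) (hT : bs + cs = T) (hr : as + 2 * bs + 3 * cs = r) :
    coeff (F3 A B Cc) (monomial (F3 a' b' c') k * wbar r) =
      k * ((S.choose as : ZMod 2) * (T.choose bs : ZMod 2)) := by
  subst h1 h2 h3 hS hT hr
  rw [coeff_F3_monomial_mul, if_pos ⟨by omega, by omega, by omega⟩,
    show a' + as - a' = as by omega, show b' + bs - b' = bs by omega,
    show c' + cs - c' = cs by omega, coeff_wbar, if_pos rfl]

lemma coeff_mmw_zero (k : ZMod 2) (a' b' c' A B Cc r : ℕ)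
    (h : ¬(a' ≤ A ∧ b' ≤ B ∧ c' ≤ Cc)) :
    coeff (F3 A B Cc) (monomial (F3 a' b' c') k * wbar r) = 0 := by
  rw [coeff_F3_monomial_mul, if_neg h]

theorem wbar_identity_forces_alpha_beta_zero (t : ℕ) (ht : 3 ≤ t)
    (a b m l n : ZMod 2)
    (h : (C a * (X 0) ^ 3 + C b * (X 0 * X 1) + C m * X 2) * wbar (2 ^ t - 3) =
         C l * ((X 0) ^ 2 * wbar (2 ^ t - 2)) + C n * (X 0 * wbar (2 ^ t - 1))) :
    a = 0 ∧ b = 0 := by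
  obtain ⟨Q, h8, hQ⟩ : ∃ Q : ℕ, 2 ^ t = 8 * Q ∧ 1 ≤ Q := by
    refine ⟨2 ^ (t - 3), ?_, Nat.one_le_two_pow⟩
    rw [show (8 : ℕ) = 2 ^ 3 by norm_num, ← pow_add]
    congr 1; omega
  have e1 : C a * (X 0 : MvPolynomial (Fin 3) (ZMod 2)) ^ 3 = monomial (F3 3 0 0) a := by
    simpa using term_eq a 3 0 0
  have e2 : C b * ((X 0 : MvPolynomial (Fin 3) (ZMod 2)) * X 1) = monomial (F3 1 1 0) b := by
    simpa [mul_assoc] using term_eq b 1 1 0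
  have e3 : C m * (X 2 : MvPolynomial (Fin 3) (ZMod 2)) = monomial (F3 0 0 1) m := by
    simpa using term_eq m 0 0 1
  have e4 : C l * ((X 0 : MvPolynomial (Fin 3) (ZMod 2)) ^ 2 * wbar (2 ^ t - 2))
      = monomial (F3 2 0 0) l * wbar (2 ^ t - 2) := by
    rw [← mul_assoc]; congr 1; simpa using term_eq l 2 0 0
  have e5 : C n * ((X 0 : MvPolynomial (Fin 3) (ZMod 2)) * wbar (2 ^ t - 1))
      = monomial (F3 1 0 0) n * wbar (2 ^ t - 1) := by
    rw [← mul_assoc]; congr 1; simpa using term_eq n 1 0 0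
  rw [e1, e2, e3, e4, e5] at h
  constructor
  · have H := congrArg (coeff (F3 4 (4 * Q - 2) 0)) h
    rw [add_mul, add_mul, coeff_add, coeff_add, coeff_add,
      coeff_mmw a 3 0 0 4 (4 * Q - 2) 0 (2 ^ t - 3) 1 (4 * Q - 2) 0 (4 * Q - 1) (4 * Q - 2)
        (by omega) (by omega) (by omega) (by omega) (by omega) (by omega),
      coeff_mmw b 1 1 0 4 (4 * Q - 2) 0 (2 ^ t - 3) 3 (4 * Q - 3) 0 (4 * Q) (4 * Q - 3)
        (by omega) (by omega) (by omega) (by omega) (by omega) (by omega),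
      coeff_mmw_zero m 0 0 1 4 (4 * Q - 2) 0 (2 ^ t - 3) (by simp),
      coeff_mmw l 2 0 0 4 (4 * Q - 2) 0 (2 ^ t - 2) 2 (4 * Q - 2) 0 (4 * Q) (4 * Q - 2)
        (by omega) (by omega) (by omega) (by omega) (by omega) (by omega),
      coeff_mmw n 1 0 0 4 (4 * Q - 2) 0 (2 ^ t - 1) 3 (4 * Q - 2) 0 (4 * Q + 1) (4 * Q - 2)
        (by omega) (by omega) (by omega) (by omega) (by omega) (by omega)] at H
    simp only [V1 hQ, V2 hQ, V3 hQ, V4 hQ, Nat.choose_self, Nat.cast_one, mul_one, mul_zero,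
      zero_mul, add_zero, zero_add] at H
    simpa using H
  · have H := congrArg (coeff (F3 3 (4 * Q - 3) 1)) h
    rw [add_mul, add_mul, coeff_add, coeff_add, coeff_add,
      coeff_mmw a 3 0 0 3 (4 * Q - 3) 1 (2 ^ t - 3) 0 (4 * Q - 3) 1 (4 * Q - 2) (4 * Q - 2)
        (by omega) (by omega) (by omega) (by omega) (by omega) (by omega),
      coeff_mmw b 1 1 0 3 (4 * Q - 3) 1 (2 ^ t - 3) 2 (4 * Q - 4) 1 (4 * Q - 1) (4 * Q - 3)
        (by omega) (by omega) (by omega) (by omega) (by omega) (by omega),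
      coeff_mmw m 0 0 1 3 (4 * Q - 3) 1 (2 ^ t - 3) 3 (4 * Q - 3) 0 (4 * Q) (4 * Q - 3)
        (by omega) (by omega) (by omega) (by omega) (by omega) (by omega),
      coeff_mmw l 2 0 0 3 (4 * Q - 3) 1 (2 ^ t - 2) 1 (4 * Q - 3) 1 (4 * Q - 1) (4 * Q - 2)
        (by omega) (by omega) (by omega) (by omega) (by omega) (by omega),
      coeff_mmw n 1 0 0 3 (4 * Q - 3) 1 (2 ^ t - 1) 2 (4 * Q - 3) 1 (4 * Q) (4 * Q - 2)
        (by omega) (by omega) (by omega) (by omega) (by omega) (by omega)] at H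
    simp only [V1 hQ, V2 hQ, V3 hQ, V5 hQ, V6 hQ, V7 hQ, Nat.choose_zero_right, Nat.choose_self,
      Nat.cast_one, mul_one, one_mul, mul_zero, zero_mul, add_zero, zero_add] at H
    simpa using H
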